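/- Let {(B_m,G_m)}_{m=1}^M be a deterministic tiling of [T]×[p], and let ε ∈ R^{T×p} be a random matrix satisfying H_0 (jointly independent columns) and local exchangeability with respect to the tiling. For each tile m let L_{(m)} ∈ R^{|G_m|×k} be a deterministic matrix with L_{(m)}ᵀ L_{(m)} invertible, let H_m = I − L_{(m)}(L_{(m)}ᵀ L_{(m)})⁻¹ L_{(m)}ᵀ, and define the mosaic residual matrix ε̂ ∈ R^{T×p} by ε̂_{B_m,G_m} := ε_{(m)} H_m. For r = 1,…,R let P_m^{(r)} ∈ R^{|B_m|×|B_m|} be i.i.d. uniformly random permutation matrices, independent of ε, and define ε̃^{(r)} ∈ R^{T×p} by ε̃^{(r)}_{B_m,G_m} := P_m^{(r)} ε_{(m)} H_m. Then for every measurable test statistic S : R^{T×p} → R, the p-value p_val = (1 + Σ_{r=1}^R 1{S(ε̂) ≤ S(ε̃^{(r)})})/(R+1) satisfies P(p_val ≤ α) ≤ α for every α ∈ (0,1). -/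

import Mathlib

open MeasureTheory ProbabilityTheory Matrix

instance permMeasurableSpace {α : Type*} : MeasurableSpace (Equiv.Perm α) := ⊤

/-- The uniform probability measure on the permutations of a finite type. -/
noncomputable def uniformPermMeasure (α : Type*) [Fintype α] [DecidableEq α] :
    Measure (Equiv.Perm α) :=
  haveI : Nonempty (Equiv.Perm α) := ⟨1⟩
  (PMF.uniformOfFintype (Equiv.Perm α)).toMeasure

instance permMeasurableSingletonClass {α : Type*} :
    MeasurableSingletonClass (Equiv.Perm α) :=
  ⟨fun _ => MeasurableSpace.measurableSet_top⟩

instance uniformPermMeasure_isProb (α : Type*) [Fintype α] [DecidableEq α] :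
    IsProbabilityMeasure (uniformPermMeasure α) := by
  haveI : Nonempty (Equiv.Perm α) := ⟨1⟩
  unfold uniformPermMeasure
  infer_instance



variable {T P M : ℕ} {B : Fin M → Finset (Fin T)} {G : Fin M → Finset (Fin P)}
  {tile : Fin T → Fin P → Fin M}

/-- the within-tile row-permutation action on matrices -/
def act (hB : ∀ t j, t ∈ B (tile t j)) (g : ∀ m, Equiv.Perm {t : Fin T // t ∈ B m})
    (e : Fin T → Fin P → ℝ) : Fin T → Fin P → ℝ :=
  fun t j => e ((g (tile t j)) ⟨t, hB t j⟩).1 j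

lemma vact_congr (g : ∀ m, Equiv.Perm {t : Fin T // t ∈ B m}) {m m' : Fin M} (h : m = m')
    (t : Fin T) (ht : t ∈ B m) (ht' : t ∈ B m') :
    ((g m) ⟨t, ht⟩).1 = ((g m') ⟨t, ht'⟩).1 := by subst h; rfl

lemma mem_tile (huniq : ∀ m t j, t ∈ B m → j ∈ G m → m = tile t j) {m : Fin M} {t : Fin T}
    {j : Fin P} (ht : t ∈ B m) (hj : j ∈ G m) : tile t j = m := (huniq m t j ht hj).symm

lemma tile_act (hB : ∀ t j, t ∈ B (tile t j)) (hG : ∀ t j, j ∈ G (tile t j))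
    (huniq : ∀ m t j, t ∈ B m → j ∈ G m → m = tile t j)
    (g : ∀ m, Equiv.Perm {t : Fin T // t ∈ B m}) (t : Fin T) (j : Fin P) :
    tile ((g (tile t j)) ⟨t, hB t j⟩).1 j = tile t j :=
  mem_tile huniq ((g (tile t j)) ⟨t, hB t j⟩).2 (hG t j)

lemma act_one (hB : ∀ t j, t ∈ B (tile t j)) (e : Fin T → Fin P → ℝ) :
    act hB (fun _ => 1) e = e := rfl

lemma act_mul (hB : ∀ t j, t ∈ B (tile t j)) (hG : ∀ t j, j ∈ G (tile t j))
    (huniq : ∀ m t j, t ∈ B m → j ∈ G m → m = tile t j)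
    (g g' : ∀ m, Equiv.Perm {t : Fin T // t ∈ B m}) (e : Fin T → Fin P → ℝ) :
    act hB g' (act hB g (e : Fin T → Fin P → ℝ)) = act hB (fun m => g m * g' m) e := by
  funext t j
  show (act hB g e) ((g' (tile t j)) ⟨t, hB t j⟩).1 j = _
  set t₁ := ((g' (tile t j)) ⟨t, hB t j⟩).1 with ht₁
  have h : tile t₁ j = tile t j := tile_act hB hG huniq g' t j
  show e ((g (tile t₁ j)) ⟨t₁, hB t₁ j⟩).1 j = e (((g (tile t j)) * (g' (tile t j))) ⟨t, hB t j⟩).1 j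
  rw [vact_congr g h t₁ (hB t₁ j) ((g' (tile t j)) ⟨t, hB t j⟩).2]
  rfl

lemma measurable_act (hB : ∀ t j, t ∈ B (tile t j))
    (g : ∀ m, Equiv.Perm {t : Fin T // t ∈ B m}) : Measurable (act hB g) := by
  refine measurable_pi_lambda _ fun t => measurable_pi_lambda _ fun j => ?_
  exact (measurable_pi_apply _).comp (measurable_pi_apply _)

variable (H : (m : Fin M) → Matrix {j : Fin P // j ∈ G m} {j : Fin P // j ∈ G m} ℝ)

/-- the per-tile residualization operator -/
noncomputable def resid (hG : ∀ t j, j ∈ G (tile t j)) (e : Fin T → Fin P → ℝ) :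
    Fin T → Fin P → ℝ :=
  fun t j => ∑ j' : {x : Fin P // x ∈ G (tile t j)}, e t j'.1 * H (tile t j) j' ⟨j, hG t j⟩

lemma resid_cast {m m' : Fin M} (h : m = m') (f : Fin P → ℝ) (j : Fin P)
    (hj : j ∈ G m) (hj' : j ∈ G m') :
    (∑ j' : {x : Fin P // x ∈ G m}, f j'.1 * H m j' ⟨j, hj⟩)
      = ∑ j' : {x : Fin P // x ∈ G m'}, f j'.1 * H m' j' ⟨j, hj'⟩ := by subst h; rfl

lemma resid_act (hB : ∀ t j, t ∈ B (tile t j)) (hG : ∀ t j, j ∈ G (tile t j))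
    (huniq : ∀ m t j, t ∈ B m → j ∈ G m → m = tile t j)
    (g : ∀ m, Equiv.Perm {t : Fin T // t ∈ B m}) (e : Fin T → Fin P → ℝ) :
    resid H hG (act hB g e) = act hB g (resid H hG e) := by
  funext t j
  set t₁ := ((g (tile t j)) ⟨t, hB t j⟩).1 with ht₁
  have h : tile t₁ j = tile t j := tile_act hB hG huniq g t j
  show (∑ j' : {x : Fin P // x ∈ G (tile t j)}, (act hB g e) t j'.1 * H (tile t j) j' ⟨j, hG t j⟩)
      = ∑ j' : {x : Fin P // x ∈ G (tile t₁ j)}, e t₁ j'.1 * H (tile t₁ j) j' ⟨j, hG t₁ j⟩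
  rw [resid_cast H h (e t₁) j (hG t₁ j) (hG t j)]
  refine Finset.sum_congr rfl fun j' _ => ?_
  have hj' : tile t j'.1 = tile t j := mem_tile huniq (hB t j) j'.2
  show e ((g (tile t j'.1)) ⟨t, hB t j'.1⟩).1 j'.1 * _ = _
  rw [vact_congr g hj' t (hB t j'.1) (hB t j)]

lemma measurable_resid (hG : ∀ t j, j ∈ G (tile t j)) : Measurable (resid H hG) := by
  refine measurable_pi_lambda _ fun t => measurable_pi_lambda _ fun j => ?_
  refine Finset.measurable_sum _ fun j' _ => ?_
  exact ((measurable_pi_apply _).comp (measurable_pi_apply _)).mul_const _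


lemma tile_act' (hB : ∀ t j, t ∈ B (tile t j)) (hG : ∀ t j, j ∈ G (tile t j))
    (huniq : ∀ m t j, t ∈ B m → j ∈ G m → m = tile t j)
    (g : ∀ m, Equiv.Perm {t : Fin T // t ∈ B m}) (j : Fin P) (t : Fin T) :
    tile ((g (tile t j)) ⟨t, hB t j⟩).1 j = tile t j :=
  (huniq (tile t j) ((g (tile t j)) ⟨t, hB t j⟩).1 j ((g (tile t j)) ⟨t, hB t j⟩).2 (hG t j)).symm

lemma vact_congr' (g : ∀ m, Equiv.Perm {t : Fin T // t ∈ B m}) {m m' : Fin M} (h : m = m')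
    (t : Fin T) (ht : t ∈ B m) (ht' : t ∈ B m') :
    ((g m) ⟨t, ht⟩).1 = ((g m') ⟨t, ht'⟩).1 := by subst h; rfl

/-- the permutation of `Fin T` induced on column `j` by the per-tile permutations `g` -/
def colPerm (hB : ∀ t j, t ∈ B (tile t j)) (hG : ∀ t j, j ∈ G (tile t j))
    (huniq : ∀ m t j, t ∈ B m → j ∈ G m → m = tile t j)
    (g : ∀ m, Equiv.Perm {t : Fin T // t ∈ B m}) (j : Fin P) : Equiv.Perm (Fin T) where
  toFun t := ((g (tile t j)) ⟨t, hB t j⟩).1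
  invFun t := (((g (tile t j))⁻¹) ⟨t, hB t j⟩).1
  left_inv t := by
    set t₁ := ((g (tile t j)) ⟨t, hB t j⟩).1 with ht₁
    have h : tile t₁ j = tile t j := tile_act' hB hG huniq g j t
    show (((g (tile t₁ j))⁻¹) ⟨t₁, hB t₁ j⟩).1 = t
    rw [vact_congr' (fun m => (g m)⁻¹) h t₁ (hB t₁ j) ((g (tile t j)) ⟨t, hB t j⟩).2]
    show (((g (tile t j))⁻¹) ((g (tile t j)) ⟨t, hB t j⟩)).1 = t
    simp
  right_inv t := by
    set t₁ := (((g (tile t j))⁻¹) ⟨t, hB t j⟩).1 with ht₁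
    have h : tile t₁ j = tile t j :=
      tile_act' hB hG huniq (fun m => (g m)⁻¹) j t
    show ((g (tile t₁ j)) ⟨t₁, hB t₁ j⟩).1 = t
    rw [vact_congr' g h t₁ (hB t₁ j) (((g (tile t j))⁻¹) ⟨t, hB t j⟩).2]
    show ((g (tile t j)) (((g (tile t j))⁻¹) ⟨t, hB t j⟩)).1 = t
    simp

lemma colPerm_tile (hB : ∀ t j, t ∈ B (tile t j)) (hG : ∀ t j, j ∈ G (tile t j))
    (huniq : ∀ m t j, t ∈ B m → j ∈ G m → m = tile t j)
    (g : ∀ m, Equiv.Perm {t : Fin T // t ∈ B m}) (j : Fin P) (t : Fin T) :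
    tile ((colPerm hB hG huniq g j) t) j = tile t j :=
  tile_act' hB hG huniq g j t



lemma map_act_eq {Ω : Type*} [MeasurableSpace Ω] (μ : Measure Ω) [IsProbabilityMeasure μ]
    {T P M : ℕ} {B : Fin M → Finset (Fin T)} {G : Fin M → Finset (Fin P)}
    {tile : Fin T → Fin P → Fin M}
    (hB : ∀ t j, t ∈ B (tile t j)) (hG : ∀ t j, j ∈ G (tile t j))
    (huniq : ∀ m t j, t ∈ B m → j ∈ G m → m = tile t j)
    (ε : Ω → Fin T → Fin P → ℝ) (hmeas : Measurable ε)
    (hcol_indep : iIndepFun (fun j ω => fun t => ε ω t j) μ)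
    (hlocexch : ∀ (j : Fin P) (π : Equiv.Perm (Fin T)), (∀ t, tile (π t) j = tile t j) →
      Measure.map (fun ω => fun t => ε ω (π t) j) μ =
        Measure.map (fun ω => fun t => ε ω t j) μ)
    (g : ∀ m, Equiv.Perm {t : Fin T // t ∈ B m}) :
    Measure.map (fun ω => act hB g (ε ω)) μ = Measure.map ε μ := by
  classical
  set ν : Fin P → Measure (Fin T → ℝ) := fun j => Measure.map (fun ω => fun t => ε ω t j) μ
    with hν
  have hcolmeas : ∀ j : Fin P, Measurable (fun ω => fun t => ε ω t j) := fun j =>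
    measurable_pi_lambda _ fun t =>
      (measurable_pi_apply j).comp ((measurable_pi_apply t).comp hmeas)
  haveI : ∀ j, IsProbabilityMeasure (ν j) := fun j =>
    Measure.isProbabilityMeasure_map (hcolmeas j).aemeasurable
  set σ : Fin P → Equiv.Perm (Fin T) := fun j => colPerm hB hG huniq g j with hσ
  -- the flip maps
  set flip : (Fin T → Fin P → ℝ) → (Fin P → Fin T → ℝ) := fun e j t => e t j with hflip
  set flip' : (Fin P → Fin T → ℝ) → (Fin T → Fin P → ℝ) := fun y t j => y j t with hflip'
  have hflipmeas : Measurable flip :=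
    measurable_pi_lambda _ fun j => measurable_pi_lambda _ fun t =>
      (measurable_pi_apply j).comp (measurable_pi_apply t)
  have hflip'meas : Measurable flip' :=
    measurable_pi_lambda _ fun t => measurable_pi_lambda _ fun j =>
      (measurable_pi_apply t).comp (measurable_pi_apply j)
  set Φ : (Fin P → Fin T → ℝ) → (Fin P → Fin T → ℝ) := fun y j => y j ∘ (σ j) with hΦ
  have hΦmeas : Measurable Φ :=
    measurable_pi_lambda _ fun j => measurable_pi_lambda _ fun t =>
      (measurable_pi_apply ((σ j) t)).comp (measurable_pi_apply j)
  -- step 1 : the law of the flipped matrix is the product of the column laws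
  have step1 : Measure.map (fun ω => flip (ε ω)) μ = Measure.pi ν := by
    refine (Measure.pi_eq fun s hs => ?_).symm
    rw [Measure.map_apply (show Measurable fun ω => flip (ε ω) from hflipmeas.comp hmeas)
      (MeasurableSet.univ_pi hs)]
    have hpre : (fun ω => flip (ε ω)) ⁻¹' Set.pi Set.univ s
        = ⋂ j, (fun ω => fun t => ε ω t j) ⁻¹' s j := by
      ext ω
      simp [Set.mem_pi, Set.mem_iInter, hflip]
    rw [hpre, hcol_indep.meas_iInter fun j => ⟨s j, hs j, rfl⟩]
    exact Finset.prod_congr rfl fun j _ => (Measure.map_apply (hcolmeas j) (hs j)).symm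
  -- per-column invariance
  have percol : ∀ j : Fin P,
      Measure.map (fun f : Fin T → ℝ => f ∘ (σ j)) (ν j) = ν j := by
    intro j
    show Measure.map (fun f : Fin T → ℝ => f ∘ (σ j)) (Measure.map (fun ω => fun t => ε ω t j) μ)
      = Measure.map (fun ω => fun t => ε ω t j) μ
    rw [Measure.map_map (show Measurable fun f : Fin T → ℝ => f ∘ (σ j) from
      measurable_pi_lambda _ fun t => measurable_pi_apply ((σ j) t)) (hcolmeas j)]
    exact hlocexch j (σ j) (colPerm_tile hB hG huniq g j)
  -- step 2 : the product law is invariant under columnwise permutations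
  have step2 : Measure.map Φ (Measure.pi ν) = Measure.pi ν := by
    refine (Measure.pi_eq fun s hs => ?_).symm
    rw [Measure.map_apply hΦmeas (MeasurableSet.univ_pi hs)]
    have hpre : Φ ⁻¹' Set.pi Set.univ s
        = Set.pi Set.univ fun j => (fun f : Fin T → ℝ => f ∘ (σ j)) ⁻¹' s j := by
      ext y
      simp [Set.mem_pi, hΦ]
    rw [hpre, Measure.pi_pi]
    refine Finset.prod_congr rfl fun j _ => ?_
    rw [← Measure.map_apply (show Measurable fun f : Fin T → ℝ => f ∘ (σ j) from
      measurable_pi_lambda _ fun t => measurable_pi_apply ((σ j) t)) (hs j), percol j]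
  -- assemble
  have hcomm : (fun ω => flip (act hB g (ε ω))) = fun ω => Φ (flip (ε ω)) := by
    funext ω
    funext j t
    rfl
  have key : Measure.map (fun ω => flip (act hB g (ε ω))) μ
      = Measure.map (fun ω => flip (ε ω)) μ := by
    rw [hcomm]
    have : (fun ω => Φ (flip (ε ω))) = Φ ∘ (fun ω => flip (ε ω)) := rfl
    rw [this, ← Measure.map_map hΦmeas (show Measurable fun ω => flip (ε ω) from
      hflipmeas.comp hmeas), step1, step2]
  have unflip : ∀ (X : Ω → Fin T → Fin P → ℝ), Measurable X →
      Measure.map X μ = Measure.map flip' (Measure.map (fun ω => flip (X ω)) μ) := by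
    intro X hX
    rw [Measure.map_map hflip'meas (show Measurable fun ω => flip (X ω) from
      hflipmeas.comp hX)]
    rfl
  rw [unflip (fun ω => act hB g (ε ω)) ((measurable_act hB g).comp hmeas),
    unflip ε hmeas, key]


lemma measure_discrete_ext {α : Type*} [MeasurableSpace α] [Countable α]
    [MeasurableSingletonClass α] {μ ν : Measure α} (h : ∀ a, μ {a} = ν {a}) : μ = ν := by
  rw [← Measure.sum_smul_dirac μ, ← Measure.sum_smul_dirac ν]
  congr 1
  funext a
  rw [h a]

lemma uniformPermMeasure_singleton {α : Type*} [Fintype α] [DecidableEq α] (x : Equiv.Perm α) :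
    uniformPermMeasure α {x} = (Fintype.card (Equiv.Perm α) : ENNReal)⁻¹ := by
  haveI : Nonempty (Equiv.Perm α) := ⟨1⟩
  rw [uniformPermMeasure, PMF.toMeasure_apply_singleton _ _ (measurableSet_singleton x),
    PMF.uniformOfFintype_apply]

section PermProd

variable {ι : Type*} [Fintype ι] [DecidableEq ι] (κ : ι → Type*) [∀ i, Fintype (κ i)]
  [∀ i, DecidableEq (κ i)]

lemma pi_uniform_singleton (g : ∀ i, Equiv.Perm (κ i)) :
    (Measure.pi fun i => uniformPermMeasure (κ i)) {g}
      = ∏ i, (Fintype.card (Equiv.Perm (κ i)) : ENNReal)⁻¹ := by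
  rw [← Set.univ_pi_singleton g, Measure.pi_pi]
  exact Finset.prod_congr rfl fun i _ => uniformPermMeasure_singleton (g i)

lemma map_bij_pi_uniform (θ : (∀ i, Equiv.Perm (κ i)) → (∀ i, Equiv.Perm (κ i)))
    (hbij : Function.Bijective θ) :
    Measure.map θ (Measure.pi fun i => uniformPermMeasure (κ i))
      = Measure.pi fun i => uniformPermMeasure (κ i) := by
  refine measure_discrete_ext fun a => ?_
  rw [Measure.map_apply (measurable_of_countable θ) (measurableSet_singleton a)]
  have hpre : θ ⁻¹' {a} = {(Equiv.ofBijective θ hbij).symm a} := by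
    ext g
    simp only [Set.mem_preimage, Set.mem_singleton_iff]
    constructor
    · intro h
      have : (Equiv.ofBijective θ hbij) g = a := h
      exact (Equiv.symm_apply_eq _).mpr this.symm |>.symm
    · rintro rfl
      exact (Equiv.ofBijective θ hbij).apply_symm_apply a
  rw [hpre, pi_uniform_singleton, pi_uniform_singleton]

lemma map_psi_eq {E : Type*} [MeasurableSpace E] (ν : Measure E) [IsProbabilityMeasure ν]
    (θ : (∀ i, Equiv.Perm (κ i)) → (∀ i, Equiv.Perm (κ i))) (hbij : Function.Bijective θ)
    (a : (∀ i, Equiv.Perm (κ i)) → E → E) (hameas : ∀ g, Measurable (a g))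
    (hainv : ∀ g, Measure.map (a g) ν = ν) :
    Measure.map (fun ge : (∀ i, Equiv.Perm (κ i)) × E => (θ ge.1, a ge.1 ge.2))
        ((Measure.pi fun i => uniformPermMeasure (κ i)).prod ν)
      = (Measure.pi fun i => uniformPermMeasure (κ i)).prod ν := by
  set Q := Measure.pi fun i => uniformPermMeasure (κ i) with hQ
  set Ψ : (∀ i, Equiv.Perm (κ i)) × E → (∀ i, Equiv.Perm (κ i)) × E :=
    fun ge => (θ ge.1, a ge.1 ge.2) with hΨ
  have hΨmeas : Measurable Ψ := by
    have h1 : Measurable fun ge : (∀ i, Equiv.Perm (κ i)) × E => θ ge.1 :=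
      (measurable_of_countable θ).comp measurable_fst
    have h2' : Measurable fun eg : E × (∀ i, Equiv.Perm (κ i)) => a eg.2 eg.1 :=
      measurable_from_prod_countable_left fun g => hameas g
    exact h1.prodMk (h2'.comp (measurable_snd.prodMk measurable_fst))
  refine (Measure.prod_eq fun s t hs ht => ?_).symm
  rw [Measure.map_apply hΨmeas (hs.prod ht),
    Measure.prod_apply (hΨmeas (hs.prod ht))]
  classical
  have hsec : ∀ g, Prod.mk g ⁻¹' (Ψ ⁻¹' s ×ˢ t)
      = if θ g ∈ s then (a g) ⁻¹' t else ∅ := by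
    intro g
    by_cases hg : θ g ∈ s
    · rw [if_pos hg]
      ext e
      simp [hΨ, hg]
    · rw [if_neg hg]
      ext e
      simp [hΨ, hg]
  calc (∫⁻ g, ν (Prod.mk g ⁻¹' (Ψ ⁻¹' s ×ˢ t)) ∂Q)
      = ∫⁻ g, Set.indicator (θ ⁻¹' s) (fun _ => ν t) g ∂Q := by
        refine lintegral_congr fun g => ?_
        rw [hsec g]
        by_cases hg : g ∈ θ ⁻¹' s
        · rw [if_pos (show θ g ∈ s from hg), Set.indicator_of_mem hg,
            ← Measure.map_apply (hameas g) ht, hainv g]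
        · rw [if_neg (show ¬ θ g ∈ s from hg), Set.indicator_of_notMem hg]
          simp
    _ = ν t * Q (θ ⁻¹' s) := lintegral_indicator_const (measurable_of_countable θ hs) _
    _ = Q s * ν t := by
        rw [← Measure.map_apply (measurable_of_countable θ) hs,
          map_bij_pi_uniform κ θ hbij, mul_comm]

end PermProd

section Count

open scoped Classical in
/-- `cnt x i` is the number of indices `j` with `x i ≤ x j` (including `i` itself). -/
noncomputable def cnt {n : ℕ} (x : Fin n → ℝ) (i : Fin n) : ℕ :=
  (Finset.univ.filter fun j => x i ≤ x j).card

lemma cnt_card_le {n : ℕ} (x : Fin n → ℝ) (k : ℕ) :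
    (Finset.univ.filter fun i => cnt x i ≤ k).card ≤ k := by
  classical
  set s := Finset.univ.filter fun i => cnt x i ≤ k with hs
  rcases s.eq_empty_or_nonempty with h | h
  · simp [h]
  · obtain ⟨i₀, hi₀, hmin⟩ := s.exists_min_image x h
    have h1 : s ⊆ Finset.univ.filter fun j => x i₀ ≤ x j := fun j hj =>
      Finset.mem_filter.2 ⟨Finset.mem_univ _, hmin j hj⟩
    have h2 : cnt x i₀ ≤ k := (Finset.mem_filter.1 hi₀).2
    exact le_trans (Finset.card_le_card h1) h2

lemma cnt_comp_equiv {n : ℕ} (x : Fin n → ℝ) (e : Equiv.Perm (Fin n)) (i : Fin n) :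
    cnt (x ∘ e) i = cnt x (e i) := by
  classical
  unfold cnt
  refine Finset.card_equiv e fun j => ?_
  simp

end Count



/-- **validity of the mosaic permutation test.** For a deterministic tiling
`{(B m, G m)}` of `[T] × [p]`, a random matrix `ε` satisfying `H₀` (jointly independent
columns) and local exchangeability with respect to the tiling, OLS projections
`H m = I − L_(m) (L_(m)ᵀ L_(m))⁻¹ L_(m)ᵀ` built from deterministic exposures `L_(m)` with
`L_(m)ᵀ L_(m)` invertible, mosaic residuals `ε̂_{B_m,G_m} = ε_(m) H_m` and within-tile
permuted variants `ε̃⁽ʳ⁾_{B_m,G_m} = P_m⁽ʳ⁾ ε_(m) H_m` (for i.i.d. uniformly random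
within-tile row permutations independent of `ε`), the p-value
`p_val = (1 + ∑ᵣ 1{S(ε̂) ≤ S(ε̃⁽ʳ⁾)})/(R+1)` satisfies `P(p_val ≤ α) ≤ α` for all
`α ∈ (0,1)` and every measurable statistic `S`. -/
theorem mosaic_permutation_test_valid
    {Ω : Type*} [MeasurableSpace Ω] (μ : Measure Ω) [IsProbabilityMeasure μ]
    (T p k M R : ℕ) (ε : Ω → Fin T → Fin p → ℝ) (hmeas : Measurable ε)
    -- the tiling: every `(t, j)` lies in exactly one rectangle `B m × G m`,
    -- namely the one indexed by `tile t j`: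
    (B : Fin M → Finset (Fin T)) (G : Fin M → Finset (Fin p))
    (tile : Fin T → Fin p → Fin M)
    (hB : ∀ t j, t ∈ B (tile t j)) (hG : ∀ t j, j ∈ G (tile t j))
    (huniq : ∀ m t j, t ∈ B m → j ∈ G m → m = tile t j)
    -- `H₀`: the columns of `ε` are jointly independent:
    (hcol_indep : iIndepFun (fun j ω => fun t => ε ω t j) μ)
    -- local exchangeability of `ε` with respect to the tiling:
    (hlocexch : ∀ (j : Fin p) (π : Equiv.Perm (Fin T)), (∀ t, tile (π t) j = tile t j) →
      Measure.map (fun ω => fun t => ε ω (π t) j) μ =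
        Measure.map (fun ω => fun t => ε ω t j) μ)
    -- the deterministic per-tile exposure matrices `L_(m) ∈ ℝ^{|G m| × k}` with
    -- `L_(m)ᵀ L_(m)` invertible, and the OLS projections `H m`:
    (L : (m : Fin M) → Matrix {j : Fin p // j ∈ G m} (Fin k) ℝ)
    (hLinv : ∀ m, IsUnit ((L m)ᵀ * L m).det)
    (H : (m : Fin M) → Matrix {j : Fin p // j ∈ G m} {j : Fin p // j ∈ G m} ℝ)
    (hH : ∀ m, H m = 1 - L m * ((L m)ᵀ * L m)⁻¹ * (L m)ᵀ)
    -- the mosaic residual matrix `ε̂` with `ε̂_{B_m, G_m} := ε_(m) H_m`: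
    (εh : Ω → Fin T → Fin p → ℝ)
    (hεh : ∀ ω t j, εh ω t j =
      ∑ j' : {x : Fin p // x ∈ G (tile t j)}, ε ω t j'.1 * H (tile t j) j' ⟨j, hG t j⟩)
    -- the i.i.d. uniformly random within-tile row permutations, independent of `ε`:
    (π : (m : Fin M) → Fin R → Ω → Equiv.Perm {t : Fin T // t ∈ B m})
    (hπmeas : ∀ m r, Measurable (π m r))
    (hπ : Measure.map (fun ω => ((fun mr : Fin M × Fin R => π mr.1 mr.2 ω), ε ω)) μ =
      (Measure.pi fun mr : Fin M × Fin R =>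
        uniformPermMeasure {t : Fin T // t ∈ B mr.1}).prod (Measure.map ε μ))
    -- the permuted residual matrices `ε̃⁽ʳ⁾` with `ε̃⁽ʳ⁾_{B_m,G_m} = P_m⁽ʳ⁾ ε_(m) H_m`:
    (εt : Fin R → Ω → Fin T → Fin p → ℝ)
    (hεt : ∀ (r : Fin R) ω, εt r ω =
      fun t j => εh ω (π (tile t j) r ω ⟨t, hB t j⟩).1 j)
    -- an arbitrary measurable test statistic:
    (S : (Fin T → Fin p → ℝ) → ℝ) (hS : Measurable S) :
    ∀ α ∈ Set.Ioo (0 : ℝ) 1,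
      μ {ω | (1 + ∑ r : Fin R, if S (εh ω) ≤ S (εt r ω) then (1 : ℝ) else 0) / (R + 1) ≤ α}
        ≤ ENNReal.ofReal α := by
  classical
  rintro α ⟨hα0, hα1⟩
  -- basic objects
  set ν : Measure (Fin T → Fin p → ℝ) := Measure.map ε μ with hνdef
  haveI : IsProbabilityMeasure ν := Measure.isProbabilityMeasure_map hmeas.aemeasurable
  set Q : Measure ((mr : Fin M × Fin R) → Equiv.Perm {t : Fin T // t ∈ B mr.1}) :=
    Measure.pi fun mr : Fin M × Fin R => uniformPermMeasure {t : Fin T // t ∈ B mr.1} with hQdef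
  -- residuals as a deterministic function of ε
  have hresid : ∀ ω, εh ω = resid H hG (ε ω) := by
    intro ω; funext t j; exact hεh ω t j
  have hactεt : ∀ (r : Fin R) ω, εt r ω = act hB (fun m => π m r ω) (resid H hG (ε ω)) := by
    intro r ω; rw [hεt r ω, ← hresid ω]; rfl
  -- the statistic tuple as a function of the permutations and ε
  set ξ : ((mr : Fin M × Fin R) → Equiv.Perm {t : Fin T // t ∈ B mr.1})
      × (Fin T → Fin p → ℝ) → Fin (R + 1) → ℝ :=
    fun ge i => Fin.cases (motive := fun _ => ℝ) (S (resid H hG ge.2))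
      (fun r => S (act hB (fun m => ge.1 (m, r)) (resid H hG ge.2))) i with hξdef
  have hξ0 : ∀ ge, ξ ge 0 = S (resid H hG ge.2) := by
    intro ge; simp only [hξdef]; rw [Fin.cases_zero]
  have hξs : ∀ ge r, ξ ge (Fin.succ r)
      = S (act hB (fun m => ge.1 (m, r)) (resid H hG ge.2)) := by
    intro ge r; simp only [hξdef]; rw [Fin.cases_succ]
  set X : Ω → Fin (R + 1) → ℝ :=
    fun ω => ξ ((fun mr : Fin M × Fin R => π mr.1 mr.2 ω), ε ω) with hXdef
  have hX0 : ∀ ω, X ω 0 = S (εh ω) := by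
    intro ω
    simp only [hXdef]
    rw [hξ0, hresid ω]
  have hXs : ∀ ω (r : Fin R), X ω (Fin.succ r) = S (εt r ω) := by
    intro ω r
    simp only [hXdef]
    rw [hξs, hactεt r ω]
  -- measurability
  have hgvecmeas : Measurable fun ω => (fun mr : Fin M × Fin R => π mr.1 mr.2 ω) :=
    measurable_pi_lambda _ fun mr => hπmeas mr.1 mr.2
  have hpairmeas : Measurable fun ω => ((fun mr : Fin M × Fin R => π mr.1 mr.2 ω), ε ω) :=
    hgvecmeas.prodMk hmeas
  have hξcoord : ∀ g, Measurable fun e => ξ (g, e) := by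
    intro g
    refine measurable_pi_lambda _ fun i => ?_
    induction i using Fin.cases with
    | zero =>
      simp only [hξ0]
      exact hS.comp (measurable_resid H hG)
    | succ r =>
      simp only [hξs]
      exact hS.comp ((measurable_act hB _).comp (measurable_resid H hG))
  have hξmeas : Measurable ξ := by
    have h1 : Measurable fun eg : (Fin T → Fin p → ℝ)
        × ((mr : Fin M × Fin R) → Equiv.Perm {t : Fin T // t ∈ B mr.1}) => ξ (eg.2, eg.1) :=
      measurable_from_prod_countable_left fun g => hξcoord g
    exact h1.comp (measurable_snd.prodMk measurable_fst)
  have hXmeas : Measurable X := hξmeas.comp hpairmeas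
  -- the law of the tuple
  have hlaw : Measure.map X μ = Measure.map ξ (Q.prod ν) := by
    rw [hXdef]
    have : (fun ω => ξ ((fun mr : Fin M × Fin R => π mr.1 mr.2 ω), ε ω))
        = ξ ∘ (fun ω => ((fun mr : Fin M × Fin R => π mr.1 mr.2 ω), ε ω)) := rfl
    rw [this, ← Measure.map_map hξmeas hpairmeas, hπ]
  -- invariance of ν under the within-tile permutations
  have hinv : ∀ g : (m : Fin M) → Equiv.Perm {t : Fin T // t ∈ B m},
      Measure.map (act hB g) ν = ν := by
    intro g
    rw [hνdef, Measure.map_map (measurable_act hB g) hmeas]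
    exact map_act_eq μ hB hG huniq ε hmeas hcol_indep hlocexch g
  -- exchangeability: swap invariance of the law of the tuple
  have hswap : ∀ i : Fin (R + 1),
      Measure.map (fun ω => X ω ∘ (Equiv.swap 0 i)) μ = Measure.map X μ := by
    intro i
    induction i using Fin.cases with
    | zero =>
      have : (fun ω => X ω ∘ (Equiv.swap (0 : Fin (R+1)) 0)) = X := by
        funext ω
        rw [Equiv.swap_self]
        rfl
      rw [this]
    | succ r₀ =>
      -- the involution on the permutation vectors
      set θ : ((mr : Fin M × Fin R) → Equiv.Perm {t : Fin T // t ∈ B mr.1})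
          → ((mr : Fin M × Fin R) → Equiv.Perm {t : Fin T // t ∈ B mr.1}) :=
        fun g mr => if mr.2 = r₀ then (g (mr.1, r₀))⁻¹ else (g (mr.1, r₀))⁻¹ * g mr with hθdef
      have hθθ : ∀ g, θ (θ g) = g := by
        intro g; funext mr; obtain ⟨m, r⟩ := mr
        by_cases hr : r = r₀
        · subst hr; simp [hθdef]
        · simp only [hθdef, hr, if_false, if_true, if_pos rfl]
          rw [inv_inv, mul_inv_cancel_left]
      have hθbij : Function.Bijective θ := Function.bijective_iff_has_inverse.mpr ⟨θ, hθθ, hθθ⟩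
      set A : ((mr : Fin M × Fin R) → Equiv.Perm {t : Fin T // t ∈ B mr.1})
          → (Fin T → Fin p → ℝ) → (Fin T → Fin p → ℝ) :=
        fun g e => act hB (fun m => g (m, r₀)) e with hAdef
      have hAmeas : ∀ g, Measurable (A g) := fun g => measurable_act hB _
      have hΨinv := map_psi_eq (fun mr : Fin M × Fin R => {t : Fin T // t ∈ B mr.1})
        ν θ hθbij A hAmeas (fun g => hinv _)
      have hΨmeas : Measurable fun ge : ((mr : Fin M × Fin R)
            → Equiv.Perm {t : Fin T // t ∈ B mr.1}) × (Fin T → Fin p → ℝ) =>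
          (θ ge.1, A ge.1 ge.2) := by
        have h1 : Measurable fun ge : ((mr : Fin M × Fin R)
            → Equiv.Perm {t : Fin T // t ∈ B mr.1}) × (Fin T → Fin p → ℝ) => θ ge.1 :=
          (measurable_of_countable θ).comp measurable_fst
        have h2' : Measurable fun eg : (Fin T → Fin p → ℝ)
            × ((mr : Fin M × Fin R) → Equiv.Perm {t : Fin T // t ∈ B mr.1}) =>
            A eg.2 eg.1 := measurable_from_prod_countable_left fun g => hAmeas g
        exact (Measurable.prodMk h1 (h2'.comp (measurable_snd.prodMk measurable_fst)))
      -- the commuting identity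
      have hcomm : (fun ge : ((mr : Fin M × Fin R)
            → Equiv.Perm {t : Fin T // t ∈ B mr.1}) × (Fin T → Fin p → ℝ) =>
            (ξ ge) ∘ (Equiv.swap 0 (Fin.succ r₀)))
          = fun ge => ξ (θ ge.1, A ge.1 ge.2) := by
        funext ge i
        have hresidA : resid H hG (A ge.1 ge.2)
            = act hB (fun m => ge.1 (m, r₀)) (resid H hG ge.2) := by
          rw [hAdef]
          exact resid_act H hB hG huniq _ _
        induction i using Fin.cases with
        | zero =>
          show ξ ge ((Equiv.swap 0 (Fin.succ r₀)) 0) = ξ (θ ge.1, A ge.1 ge.2) 0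
          rw [Equiv.swap_apply_left, hξs, hξ0, hresidA]
        | succ r =>
          show ξ ge ((Equiv.swap 0 (Fin.succ r₀)) (Fin.succ r)) = ξ (θ ge.1, A ge.1 ge.2) (Fin.succ r)
          rw [hξs]
          by_cases hr : r = r₀
          · subst hr
            rw [Equiv.swap_apply_right, hξ0, hresidA]
            have hθval : (fun m => θ ge.1 (m, r)) = fun m => (ge.1 (m, r))⁻¹ := by
              funext m; simp [hθdef]
            rw [hθval, act_mul hB hG huniq]
            have : (fun m => (fun m' => ge.1 (m', r)) m * (fun m' => (ge.1 (m', r))⁻¹) m)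
                = fun _ => 1 := by
              funext m; simp
            rw [this, act_one]
          · have hswapfix : (Equiv.swap (0 : Fin (R+1)) (Fin.succ r₀)) (Fin.succ r)
                = Fin.succ r := by
              refine Equiv.swap_apply_of_ne_of_ne (Fin.succ_ne_zero r) ?_
              simpa using hr
            rw [hswapfix, hξs, hresidA]
            have hθval : (fun m => θ ge.1 (m, r)) = fun m => (ge.1 (m, r₀))⁻¹ * ge.1 (m, r) := by
              funext m; simp [hθdef, hr]
            rw [hθval, act_mul hB hG huniq]
            have : (fun m => (fun m' => ge.1 (m', r₀)) m
                * (fun m' => (ge.1 (m', r₀))⁻¹ * ge.1 (m', r)) m)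
                = fun m => ge.1 (m, r) := by
              funext m; simp [mul_inv_cancel_left]
            rw [this]
      -- assemble the swap invariance
      have hcompmeas : Measurable fun ge : ((mr : Fin M × Fin R)
            → Equiv.Perm {t : Fin T // t ∈ B mr.1}) × (Fin T → Fin p → ℝ) =>
          (ξ ge) ∘ (Equiv.swap 0 (Fin.succ r₀)) :=
        measurable_pi_lambda _ fun i =>
          (measurable_pi_apply ((Equiv.swap 0 (Fin.succ r₀)) i)).comp hξmeas
      have step : Measure.map (fun ω => X ω ∘ (Equiv.swap 0 (Fin.succ r₀))) μ
          = Measure.map (fun ge : ((mr : Fin M × Fin R)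
              → Equiv.Perm {t : Fin T // t ∈ B mr.1}) × (Fin T → Fin p → ℝ) =>
              (ξ ge) ∘ (Equiv.swap 0 (Fin.succ r₀))) (Q.prod ν) := by
        have : (fun ω => X ω ∘ (Equiv.swap 0 (Fin.succ r₀)))
            = (fun ge : ((mr : Fin M × Fin R)
              → Equiv.Perm {t : Fin T // t ∈ B mr.1}) × (Fin T → Fin p → ℝ) =>
              (ξ ge) ∘ (Equiv.swap 0 (Fin.succ r₀)))
              ∘ (fun ω => ((fun mr : Fin M × Fin R => π mr.1 mr.2 ω), ε ω)) := rfl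
        rw [this, ← Measure.map_map hcompmeas hpairmeas, hπ]
      rw [step, hcomm]
      have : (fun ge : ((mr : Fin M × Fin R)
            → Equiv.Perm {t : Fin T // t ∈ B mr.1}) × (Fin T → Fin p → ℝ) =>
            ξ (θ ge.1, A ge.1 ge.2))
          = ξ ∘ (fun ge => (θ ge.1, A ge.1 ge.2)) := rfl
      rw [this, ← Measure.map_map hξmeas hΨmeas, hΨinv, hlaw]
  -- now the rank argument
  set κn : ℕ := Nat.floor (α * (R + 1)) with hκdef
  have hXi : ∀ i, Measurable fun ω => X ω i := fun i => (measurable_pi_apply i).comp hXmeas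
  have hcntXM : ∀ i : Fin (R + 1), Measurable fun ω => cnt (X ω) i := by
    intro i
    have hrw : (fun ω => cnt (X ω) i)
        = fun ω => ∑ j : Fin (R+1), if X ω i ≤ X ω j then 1 else 0 := by
      funext ω; exact Finset.card_filter _ _
    rw [hrw]
    exact Finset.measurable_sum _ fun j _ =>
      Measurable.ite (measurableSet_le (hXi i) (hXi j)) measurable_const measurable_const
  have hcntM : ∀ i : Fin (R + 1), Measurable fun x : Fin (R+1) → ℝ => cnt x i := by
    intro i
    have hrw : (fun x : Fin (R+1) → ℝ => cnt x i)
        = fun x => ∑ j : Fin (R+1), if x i ≤ x j then 1 else 0 := by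
      funext x; exact Finset.card_filter _ _
    rw [hrw]
    exact Finset.measurable_sum _ fun j _ =>
      Measurable.ite (measurableSet_le (measurable_pi_apply i) (measurable_pi_apply j))
        measurable_const measurable_const
  -- the target event is the rank event
  have hevent : {ω | (1 + ∑ r : Fin R, if S (εh ω) ≤ S (εt r ω) then (1 : ℝ) else 0) / (R + 1) ≤ α}
      = {ω | cnt (X ω) 0 ≤ κn} := by
    ext ω
    simp only [Set.mem_setOf_eq]
    have hnum : (1 + ∑ r : Fin R, if S (εh ω) ≤ S (εt r ω) then (1 : ℝ) else 0)
        = (cnt (X ω) 0 : ℝ) := by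
      have h1 : cnt (X ω) 0 = ∑ j : Fin (R+1), if X ω 0 ≤ X ω j then 1 else 0 :=
        Finset.card_filter _ _
      rw [h1]
      rw [Fin.sum_univ_succ]
      push_cast
      rw [if_pos (le_refl (X ω 0))]
      congr 1
      refine Finset.sum_congr rfl fun r _ => ?_
      rw [hX0 ω, hXs ω r]
    rw [hnum]
    rw [div_le_iff₀ (by positivity : (0:ℝ) < (R : ℝ) + 1)]
    rw [hκdef]
    rw [← Nat.le_floor_iff (by positivity : (0:ℝ) ≤ α * ((R:ℝ) + 1))]
  rw [hevent]
  set A : Fin (R+1) → Set Ω := fun i => {ω | cnt (X ω) i ≤ κn} with hAdef2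
  have hAmeasset : ∀ i, MeasurableSet (A i) := fun i => (hcntXM i) measurableSet_Iic
  have heq : ∀ i, μ (A i) = μ (A 0) := by
    intro i
    have hDmeas : MeasurableSet {x : Fin (R+1) → ℝ | cnt x i ≤ κn} := (hcntM i) measurableSet_Iic
    have h1 : μ (A i) = Measure.map X μ {x | cnt x i ≤ κn} :=
      (Measure.map_apply hXmeas hDmeas).symm
    have hXemeas : Measurable fun ω => X ω ∘ (Equiv.swap 0 i) :=
      measurable_pi_lambda _ fun l => (measurable_pi_apply _).comp hXmeas
    have h2 : Measure.map X μ {x | cnt x i ≤ κn}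
        = Measure.map (fun ω => X ω ∘ (Equiv.swap 0 i)) μ {x | cnt x i ≤ κn} := by
      rw [hswap i]
    have h3 : (fun ω => X ω ∘ (Equiv.swap 0 i)) ⁻¹' {x | cnt x i ≤ κn} = A 0 := by
      ext ω
      simp only [Set.mem_preimage, Set.mem_setOf_eq, hAdef2]
      rw [cnt_comp_equiv (X ω) (Equiv.swap 0 i) i, Equiv.swap_apply_right]
    rw [h1, h2, Measure.map_apply hXemeas hDmeas, h3]
  have hptw : ∀ ω, (∑ i : Fin (R+1), Set.indicator (A i) (fun _ => (1:ENNReal)) ω)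
      ≤ (κn : ENNReal) := by
    intro ω
    have hcard : (∑ i : Fin (R+1), Set.indicator (A i) (fun _ => (1:ENNReal)) ω)
        = ((Finset.univ.filter fun i : Fin (R+1) => cnt (X ω) i ≤ κn).card : ENNReal) := by
      rw [Finset.card_filter]
      push_cast
      refine Finset.sum_congr rfl fun i _ => ?_
      by_cases h : cnt (X ω) i ≤ κn
      · rw [if_pos h, Set.indicator_of_mem (show ω ∈ A i from h)]
      · rw [if_neg h, Set.indicator_of_notMem (show ω ∉ A i from h)]
    rw [hcard]
    exact_mod_cast cnt_card_le (X ω) κn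
  have hsum : ∑ i : Fin (R+1), μ (A i) ≤ (κn : ENNReal) := by
    have h1 : ∀ i : Fin (R+1), μ (A i)
        = ∫⁻ ω, Set.indicator (A i) (fun _ => (1:ENNReal)) ω ∂μ := by
      intro i
      rw [lintegral_indicator_const (hAmeasset i), one_mul]
    calc ∑ i : Fin (R+1), μ (A i)
        = ∑ i : Fin (R+1), ∫⁻ ω, Set.indicator (A i) (fun _ => (1:ENNReal)) ω ∂μ :=
          Finset.sum_congr rfl fun i _ => h1 i
      _ = ∫⁻ ω, ∑ i : Fin (R+1), Set.indicator (A i) (fun _ => (1:ENNReal)) ω ∂μ :=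
          (lintegral_finset_sum _ fun i _ => (measurable_const.indicator (hAmeasset i))).symm
      _ ≤ ∫⁻ _, (κn : ENNReal) ∂μ := lintegral_mono hptw
      _ = (κn : ENNReal) := by rw [lintegral_const, measure_univ, mul_one]
  have hmain : ((R:ENNReal) + 1) * μ (A 0) ≤ (κn : ENNReal) := by
    calc ((R:ENNReal) + 1) * μ (A 0) = ∑ _i : Fin (R+1), μ (A 0) := by
          rw [Finset.sum_const, Finset.card_univ, Fintype.card_fin, nsmul_eq_mul]
          push_cast
          ring
      _ = ∑ i : Fin (R+1), μ (A i) := Finset.sum_congr rfl fun i _ => (heq i).symm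
      _ ≤ (κn : ENNReal) := hsum
  have hκle : (κn : ENNReal) ≤ ENNReal.ofReal α * ((R:ENNReal) + 1) := by
    have hk' : (κn : ℝ) ≤ α * ((R:ℝ) + 1) := Nat.floor_le (by positivity)
    calc (κn : ENNReal) = ENNReal.ofReal (κn : ℝ) := by rw [ENNReal.ofReal_natCast]
      _ ≤ ENNReal.ofReal (α * ((R:ℝ) + 1)) := ENNReal.ofReal_le_ofReal hk'
      _ = ENNReal.ofReal α * ENNReal.ofReal ((R:ℝ) + 1) := ENNReal.ofReal_mul hα0.le
      _ = ENNReal.ofReal α * ((R:ENNReal) + 1) := by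
          congr 1
          rw [show ((R:ℝ) + 1) = ((R + 1 : ℕ) : ℝ) by push_cast; ring, ENNReal.ofReal_natCast]
          push_cast
          ring
  have hfin : μ (A 0) * ((R:ENNReal) + 1) ≤ ENNReal.ofReal α * ((R:ENNReal) + 1) := by
    rw [mul_comm]
    exact le_trans hmain hκle
  exact (ENNReal.mul_le_mul_iff_left (by simp) (by simp)).mp hfin
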